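/- Let d ≥ 1 and set N_d = Σ_{ℓ=1}^{d} C(d,ℓ) · ω_ℓ / ℓ^{(d-ℓ)/2}, where ω_ℓ is the volume of the ℓ-dimensional unit ball. Then for every r > 0, Σ_{k ∈ ℕ₀^d, 0 < |k| < r} 2^{ν(k)} ≤ N_d · r^d, where the sum runs over nonzero multi-indices k = (k_1,…,k_d) with nonnegative integer entries and Euclidean norm |k| < r, and ν(k) denotes the number of nonzero components of k. -/

import Mathlib

open MeasureTheory
open Metric ENNReal

/-- The volume of the unit ball in `ℝ^n`. -/
noncomputable def unitBallVolume (n : ℕ) : ℝ :=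
  (volume (Metric.ball (0 : EuclideanSpace ℝ (Fin n)) 1)).toReal

/-- Interval of unit length at lattice position `n`, on the positive or negative side. -/
def Jset (n : ℕ) : Bool → Set ℝ
  | true => Set.Ioo ((n : ℝ) - 1) n
  | false => Set.Ioo (-(n : ℝ)) (-((n : ℝ) - 1))

lemma Jset_measurable (n : ℕ) (b : Bool) : MeasurableSet (Jset n b) := by
  cases b <;> exact measurableSet_Ioo

lemma Jset_volume (n : ℕ) (b : Bool) : volume (Jset n b) = 1 := by
  cases b <;> simp only [Jset] <;> rw [Real.volume_Ioo] <;> norm_num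

lemma Jset_sq_lt {n : ℕ} (hn : 1 ≤ n) {b : Bool} {x : ℝ} (hx : x ∈ Jset n b) :
    x ^ 2 < (n : ℝ) ^ 2 := by
  have h1 : (1 : ℝ) ≤ n := by exact_mod_cast hn
  cases b <;> simp only [Jset, Set.mem_Ioo] at hx <;> nlinarith [hx.1, hx.2]

lemma Jset_disjoint {n m : ℕ} (hn : 1 ≤ n) (hm : 1 ≤ m) {b c : Bool}
    (h : (n, b) ≠ (m, c)) : Disjoint (Jset n b) (Jset m c) := by
  have h1 : (1 : ℝ) ≤ n := by exact_mod_cast hn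
  have h2 : (1 : ℝ) ≤ m := by exact_mod_cast hm
  have key : ∀ p q : ℕ, p < q → (p : ℝ) ≤ (q : ℝ) - 1 := by
    intro p q hpq
    have : p + 1 ≤ q := hpq
    have := (Nat.cast_le (α := ℝ)).2 this
    push_cast at this; linarith
  cases b <;> cases c <;> simp only [Jset] <;> rw [Set.Ioo_disjoint_Ioo]
  · -- false false
    have hnm : n ≠ m := fun e => h (by simp [e])
    rcases lt_or_gt_of_ne hnm with hlt | hlt
    · exact le_trans inf_le_right (le_trans (by have := key n m hlt; linarith) le_sup_left)
    · exact le_trans inf_le_left (le_trans (by have := key m n hlt; linarith) le_sup_right)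
  · -- false true
    exact le_trans inf_le_left (le_trans (by linarith) le_sup_right)
  · -- true false
    exact le_trans inf_le_right (le_trans (by linarith) le_sup_left)
  · -- true true
    have hnm : n ≠ m := fun e => h (by simp [e])
    rcases lt_or_gt_of_ne hnm with hlt | hlt
    · exact le_trans inf_le_left (le_trans (key n m hlt) le_sup_right)
    · exact le_trans inf_le_right (le_trans (key m n hlt) le_sup_left)

/-- Core counting lemma. -/
lemma cube_count (ℓ : ℕ) (hℓ : 1 ≤ ℓ) (r : ℝ) (hr : 0 ≤ r) (T : Finset (Fin ℓ → ℕ))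
    (h1 : ∀ k ∈ T, ∀ i, 1 ≤ k i)
    (h2 : ∀ k ∈ T, (∑ i, ((k i : ℝ)) ^ 2) < r ^ 2) :
    (2 : ℝ) ^ ℓ * T.card ≤ unitBallVolume ℓ * r ^ ℓ := by
  classical
  set A : (Fin ℓ → ℕ) × (Fin ℓ → Bool) → Set (EuclideanSpace ℝ (Fin ℓ)) := fun p =>
    (MeasurableEquiv.toLp 2 (Fin ℓ → ℝ)).symm ⁻¹' (Set.univ.pi fun i => Jset (p.1 i) (p.2 i))
    with hA
  have hmeas : ∀ p, MeasurableSet (A p) := fun p =>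
    (MeasurableEquiv.toLp 2 (Fin ℓ → ℝ)).symm.measurable
      (MeasurableSet.univ_pi fun i => Jset_measurable _ _)
  have hvol : ∀ p, volume (A p) = 1 := by
    intro p
    rw [hA]
    rw [(EuclideanSpace.volume_preserving_symm_measurableEquiv_toLp (Fin ℓ)).measure_preimage
      (MeasurableSet.univ_pi fun i => Jset_measurable _ _).nullMeasurableSet]
    rw [volume_pi_pi]
    simp [Jset_volume]
  have hx_mem : ∀ p (x : EuclideanSpace ℝ (Fin ℓ)),
      x ∈ A p ↔ ∀ i, x i ∈ Jset (p.1 i) (p.2 i) := by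
    intro p x
    simp [hA, Set.mem_pi, MeasurableEquiv.toLp]
    exact Iff.rfl
  set S : Finset ((Fin ℓ → ℕ) × (Fin ℓ → Bool)) := T ×ˢ Finset.univ with hS
  -- disjointness
  have hdisj : (↑S : Set _).PairwiseDisjoint A := by
    intro p hp q hq hpq
    simp only [hS, Finset.coe_product, Set.mem_prod] at hp hq
    have : ∃ i, (p.1 i, p.2 i) ≠ (q.1 i, q.2 i) := by
      by_contra hcon
      push_neg at hcon
      apply hpq
      ext i
      · exact congrArg Prod.fst (hcon i)
      · exact congrArg Prod.snd (hcon i)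
    obtain ⟨i, hi⟩ := this
    have hd := Jset_disjoint (h1 p.1 (Finset.mem_coe.1 hp.1) i)
      (h1 q.1 (Finset.mem_coe.1 hq.1) i) hi
    refine Set.disjoint_left.2 fun x hxp hxq => ?_
    exact Set.disjoint_left.1 hd ((hx_mem p x).1 hxp i) ((hx_mem q x).1 hxq i)
  -- subset of ball
  have hsub : ∀ p ∈ S, A p ⊆ ball (0 : EuclideanSpace ℝ (Fin ℓ)) r := by
    intro p hp x hx
    have hpT : p.1 ∈ T := (Finset.mem_product.1 hp).1
    rw [mem_ball, dist_zero_right, EuclideanSpace.norm_eq]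
    have hrpos : 0 < r := by
      rcases eq_or_lt_of_le hr with h | h
      · exfalso
        have := h2 p.1 hpT
        have hnon : 0 ≤ ∑ i, ((p.1 i : ℝ)) ^ 2 := Finset.sum_nonneg fun i _ => sq_nonneg _
        nlinarith
      · exact h
    rw [Real.sqrt_lt' hrpos]
    calc (∑ i, ‖x i‖ ^ 2) = ∑ i, (x i) ^ 2 := by simp [sq_abs, Real.norm_eq_abs]
      _ < ∑ i, ((p.1 i : ℝ)) ^ 2 := by
          have hne : Nonempty (Fin ℓ) := Fin.pos_iff_nonempty.1 (by omega)
          apply Finset.sum_lt_sum_of_nonempty Finset.univ_nonempty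
          · intro i _
            exact Jset_sq_lt (h1 p.1 hpT i) ((hx_mem p x).1 hx i)
      _ < r ^ 2 := h2 p.1 hpT
  -- measure comparison
  have hcount : (volume (⋃ p ∈ S, A p)) = (S.card : ℝ≥0∞) := by
    rw [measure_biUnion_finset hdisj (fun p _ => hmeas p)]
    simp [hvol]
  have hball : volume (ball (0 : EuclideanSpace ℝ (Fin ℓ)) r)
      = ENNReal.ofReal (r ^ ℓ) * volume (ball (0 : EuclideanSpace ℝ (Fin ℓ)) 1) := by
    haveI : Nonempty (Fin ℓ) := Fin.pos_iff_nonempty.1 (by omega)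
    haveI : Nontrivial (EuclideanSpace ℝ (Fin ℓ)) := inferInstance
    rw [Measure.addHaar_ball volume 0 hr, finrank_euclideanSpace_fin]
  have hle : (S.card : ℝ≥0∞) ≤ ENNReal.ofReal (r ^ ℓ) * volume (ball (0 : EuclideanSpace ℝ (Fin ℓ)) 1) := by
    rw [← hcount, ← hball]
    exact measure_mono (Set.iUnion₂_subset hsub)
  have hfin : ENNReal.ofReal (r ^ ℓ) * volume (ball (0 : EuclideanSpace ℝ (Fin ℓ)) 1) ≠ ⊤ :=
    ENNReal.mul_ne_top ENNReal.ofReal_ne_top measure_ball_lt_top.ne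
  have := ENNReal.toReal_le_toReal (by simp) hfin |>.2 hle
  rw [ENNReal.toReal_mul, ENNReal.toReal_ofReal (by positivity)] at this
  rw [show ((S.card : ℝ≥0∞)).toReal = (S.card : ℝ) from rfl] at this
  have hcard : S.card = T.card * 2 ^ ℓ := by
    rw [hS, Finset.card_product, Finset.card_univ]
    simp [Fintype.card_fun]
  rw [hcard] at this
  push_cast at this
  unfold unitBallVolume
  linarith

lemma unitBallVolume_nonneg (n : ℕ) : 0 ≤ unitBallVolume n := ENNReal.toReal_nonneg

lemma rpow_aux (d ℓ : ℕ) (hℓ : 1 ≤ ℓ) (hld : ℓ ≤ d) {r : ℝ} (hr : 0 < r) (h : (ℓ : ℝ) ≤ r ^ 2) :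
    (ℓ : ℝ) ^ (((d : ℝ) - ℓ) / 2) * r ^ ℓ ≤ r ^ d := by
  have hsr : Real.sqrt ℓ ≤ r := by
    have := Real.sqrt_le_sqrt h
    rwa [Real.sqrt_sq hr.le] at this
  have hcast : ((d : ℝ) - ℓ) / 2 = (1 / 2 : ℝ) * ((d - ℓ : ℕ) : ℝ) := by
    rw [Nat.cast_sub hld]; ring
  have h1 : (ℓ : ℝ) ^ (((d : ℝ) - ℓ) / 2) = Real.sqrt ℓ ^ (d - ℓ) := by
    rw [hcast, Real.rpow_mul (Nat.cast_nonneg ℓ), ← Real.sqrt_eq_rpow, Real.rpow_natCast]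
  rw [h1]
  calc Real.sqrt ℓ ^ (d - ℓ) * r ^ ℓ ≤ r ^ (d - ℓ) * r ^ ℓ :=
      mul_le_mul_of_nonneg_right (pow_le_pow_left₀ (Real.sqrt_nonneg _) hsr _) (by positivity)
    _ = r ^ d := by rw [← pow_add]; congr 1; omega

lemma fiber_bound (d : ℕ) (r : ℝ) (hr : 0 < r) (s : Finset (Fin d)) (hs : s.Nonempty)
    (G : Finset (Fin d → ℕ))
    (hG : ∀ k ∈ G, (∀ i, k i ≠ 0 ↔ i ∈ s) ∧ (∑ i, ((k i : ℝ)) ^ 2) < r ^ 2) :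
    (2 : ℝ) ^ s.card * G.card ≤
      unitBallVolume s.card * r ^ d / (s.card : ℝ) ^ (((d : ℝ) - s.card) / 2) := by
  classical
  set ℓ := s.card with hℓdef
  have hℓ1 : 1 ≤ ℓ := Finset.card_pos.2 hs
  have hℓd : ℓ ≤ d := by simpa using Finset.card_le_univ s
  have hℓpos : (0 : ℝ) < (ℓ : ℝ) := by exact_mod_cast hℓ1
  have hc : (0 : ℝ) < (ℓ : ℝ) ^ (((d : ℝ) - ℓ) / 2) := Real.rpow_pos_of_pos hℓpos _
  have hω : 0 ≤ unitBallVolume ℓ := unitBallVolume_nonneg ℓ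
  rcases G.eq_empty_or_nonempty with hGe | hGne
  · rw [hGe]
    simp only [Finset.card_empty, Nat.cast_zero, mul_zero]
    positivity
  set e : Fin ℓ ≃ {x // x ∈ s} := s.equivFin.symm with he
  set T : Finset (Fin ℓ → ℕ) := G.image (fun k j => k (e j)) with hT
  have hinj : Set.InjOn (fun (k : Fin d → ℕ) (j : Fin ℓ) => k (e j)) ↑G := by
    intro k hk k' hk' hkk'
    funext i
    by_cases hi : i ∈ s
    · have := congrFun hkk' (e.symm ⟨i, hi⟩)
      simpa using this
    · have h0 : k i = 0 := by
        by_contra hne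
        exact hi (((hG k (Finset.mem_coe.1 hk)).1 i).1 hne)
      have h0' : k' i = 0 := by
        by_contra hne
        exact hi (((hG k' (Finset.mem_coe.1 hk')).1 i).1 hne)
      rw [h0, h0']
  have hcard : T.card = G.card := Finset.card_image_of_injOn hinj
  have hsum : ∀ k ∈ G, (∑ i ∈ s, ((k i : ℝ)) ^ 2) < r ^ 2 := by
    intro k hk
    calc (∑ i ∈ s, ((k i : ℝ)) ^ 2) ≤ ∑ i, ((k i : ℝ)) ^ 2 :=
        Finset.sum_le_sum_of_subset_of_nonneg (Finset.subset_univ s)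
          (fun i _ _ => sq_nonneg _)
      _ < r ^ 2 := (hG k hk).2
  have hAle := cube_count ℓ hℓ1 r hr.le T
    (by
      intro k' hk'
      obtain ⟨k, hk, rfl⟩ := Finset.mem_image.1 hk'
      intro j
      exact Nat.one_le_iff_ne_zero.2 (((hG k hk).1 _).2 (e j).2))
    (by
      intro k' hk'
      obtain ⟨k, hk, rfl⟩ := Finset.mem_image.1 hk'
      have h1 : (∑ j : Fin ℓ, ((k (e j) : ℝ)) ^ 2) = ∑ i ∈ s, ((k i : ℝ)) ^ 2 := by
        rw [← Finset.sum_coe_sort s (fun i => ((k i : ℝ)) ^ 2)]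
        exact Equiv.sum_comp e (fun i : {x // x ∈ s} => ((k i : ℝ)) ^ 2)
      simpa [h1] using hsum k hk)
  -- `ℓ ≤ r²` from a witness
  obtain ⟨k₀, hk₀⟩ := hGne
  have hℓr : (ℓ : ℝ) ≤ r ^ 2 := by
    have h1 : (ℓ : ℝ) = ∑ i ∈ s, (1 : ℝ) := by simp [hℓdef]
    have h2 : (∑ i ∈ s, (1 : ℝ)) ≤ ∑ i ∈ s, ((k₀ i : ℝ)) ^ 2 := by
      apply Finset.sum_le_sum
      intro i hi
      have : 1 ≤ k₀ i := Nat.one_le_iff_ne_zero.2 (((hG k₀ hk₀).1 i).2 hi)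
      have : (1 : ℝ) ≤ (k₀ i : ℝ) := by exact_mod_cast this
      nlinarith
    linarith [hsum k₀ hk₀]
  have hmain : unitBallVolume ℓ * r ^ ℓ ≤
      unitBallVolume ℓ * r ^ d / (ℓ : ℝ) ^ (((d : ℝ) - ℓ) / 2) := by
    rw [le_div_iff₀ hc]
    have := rpow_aux d ℓ hℓ1 hℓd hr hℓr
    calc unitBallVolume ℓ * r ^ ℓ * (ℓ : ℝ) ^ (((d : ℝ) - ℓ) / 2)
        = unitBallVolume ℓ * ((ℓ : ℝ) ^ (((d : ℝ) - ℓ) / 2) * r ^ ℓ) := by ring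
      _ ≤ unitBallVolume ℓ * r ^ d := mul_le_mul_of_nonneg_left this hω
  calc (2 : ℝ) ^ ℓ * G.card = (2 : ℝ) ^ ℓ * T.card := by rw [hcard]
    _ ≤ unitBallVolume ℓ * r ^ ℓ := hAle
    _ ≤ _ := hmain

/-- The constant `N_d = ∑_{ℓ=1}^d C(d,ℓ) ω_ℓ / ℓ^{(d-ℓ)/2}`. -/
noncomputable def latticeConstant (d : ℕ) : ℝ :=
  ∑ ℓ ∈ Finset.Icc 1 d,
    (d.choose ℓ : ℝ) * unitBallVolume ℓ / (ℓ : ℝ) ^ (((d : ℝ) - ℓ) / 2)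

/-- **Weighted lattice point count** (inequality (3.3)–(3.4) of
Benguria–Vallejos–Van Den Bosch): for `d ≥ 1` and `r > 0`,
`∑_{k ∈ ℕ₀^d, 0 < |k| < r} 2^{ν(k)} ≤ N_d r^d`, where `ν(k)` is the number of
nonzero components of the multi-index `k`. -/
theorem weighted_lattice_count (d : ℕ) (hd : 1 ≤ d) (r : ℝ) (hr : 0 < r) :
    (∑ᶠ k ∈ {k : Fin d → ℕ | k ≠ 0 ∧ Real.sqrt (∑ i, (k i : ℝ) ^ 2) < r},
        (2 : ℝ) ^ (Finset.univ.filter (fun i => k i ≠ 0)).card)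
      ≤ latticeConstant d * r ^ d := by
  classical
  set big : Finset (Fin d → ℕ) := Fintype.piFinset fun _ => Finset.range (⌈r⌉₊ + 1) with hbig
  set F : Finset (Fin d → ℕ) :=
    big.filter (fun k => k ≠ 0 ∧ Real.sqrt (∑ i, (k i : ℝ) ^ 2) < r) with hF
  have hsetF : {k : Fin d → ℕ | k ≠ 0 ∧ Real.sqrt (∑ i, (k i : ℝ) ^ 2) < r} = ↑F := by
    ext k
    simp only [hF, Set.mem_setOf_eq, Finset.coe_filter, hbig, Fintype.mem_piFinset,
      Finset.mem_range]
    constructor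
    · rintro ⟨h0, hlt⟩
      refine ⟨fun i => ?_, h0, hlt⟩
      have h1 : ((k i : ℝ)) ^ 2 ≤ ∑ j, ((k j : ℝ)) ^ 2 :=
        Finset.single_le_sum (f := fun j => ((k j : ℝ)) ^ 2) (fun j _ => sq_nonneg _)
          (Finset.mem_univ i)
      have h2 : (k i : ℝ) ≤ Real.sqrt (∑ j, ((k j : ℝ)) ^ 2) := by
        calc (k i : ℝ) = Real.sqrt (((k i : ℝ)) ^ 2) := (Real.sqrt_sq (Nat.cast_nonneg _)).symm
          _ ≤ _ := Real.sqrt_le_sqrt h1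
      have h3 : (k i : ℝ) ≤ (⌈r⌉₊ : ℝ) := (lt_of_le_of_lt h2 hlt).le.trans (Nat.le_ceil r)
      have h4 : k i ≤ ⌈r⌉₊ := by exact_mod_cast h3
      omega
    · rintro ⟨_, h⟩; exact h
  rw [hsetF, finsum_mem_coe_finset]
  -- bound per support
  set B : Finset (Fin d) → ℝ := fun s =>
    if s = ∅ then 0
    else unitBallVolume s.card * r ^ d / (s.card : ℝ) ^ (((d : ℝ) - s.card) / 2) with hB
  have step1 : (∑ k ∈ F, (2 : ℝ) ^ (Finset.univ.filter (fun i => k i ≠ 0)).card)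
      ≤ ∑ s : Finset (Fin d), B s := by
    rw [← Finset.sum_fiberwise F (fun k => Finset.univ.filter (fun i => k i ≠ 0))
      (fun k => (2 : ℝ) ^ (Finset.univ.filter (fun i => k i ≠ 0)).card)]
    apply Finset.sum_le_sum
    intro s _
    set G := F.filter (fun k => Finset.univ.filter (fun i => k i ≠ 0) = s) with hGdef
    have hGmem : ∀ k ∈ G, (∀ i, k i ≠ 0 ↔ i ∈ s) ∧ k ≠ 0 ∧ (∑ i, ((k i : ℝ)) ^ 2) < r ^ 2 := by
      intro k hk
      rw [hGdef, Finset.mem_filter, hF, Finset.mem_filter] at hk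
      obtain ⟨⟨_, h0, hlt⟩, hfil⟩ := hk
      refine ⟨fun i => ?_, h0, ?_⟩
      · rw [← hfil]; simp
      · have hnn : 0 ≤ ∑ i, ((k i : ℝ)) ^ 2 := Finset.sum_nonneg fun i _ => sq_nonneg _
        rwa [Real.sqrt_lt' hr] at hlt
    have hcongr : (∑ k ∈ G, (2 : ℝ) ^ (Finset.univ.filter (fun i => k i ≠ 0)).card)
        = (2 : ℝ) ^ s.card * G.card := by
      rw [Finset.sum_congr rfl (fun k hk => ?_), Finset.sum_const, nsmul_eq_mul, mul_comm]
      have := (Finset.mem_filter.1 hk).2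
      rw [this]
    rw [hcongr]
    rcases eq_or_ne s ∅ with hse | hsne
    · have : G = ∅ := by
        rw [Finset.eq_empty_iff_forall_notMem]
        intro k hk
        obtain ⟨hiff, h0, _⟩ := hGmem k hk
        obtain ⟨i, hi⟩ := Function.ne_iff.1 h0
        have := (hiff i).1 hi
        rw [hse] at this
        exact absurd this (Finset.notMem_empty i)
      rw [this, hse, hB]
      simp
    · have hs : s.Nonempty := Finset.nonempty_of_ne_empty hsne
      rw [hB]
      simp only [hsne, if_false]
      exact fiber_bound d r hr s hs G (fun k hk => ⟨(hGmem k hk).1, (hGmem k hk).2.2⟩)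
  -- now sum over supports, grouped by cardinality
  have step2 : (∑ s : Finset (Fin d), B s)
      = ∑ ℓ ∈ Finset.range (d + 1),
          ∑ s ∈ Finset.univ.filter (fun s : Finset (Fin d) => s.card = ℓ), B s := by
    rw [Finset.sum_fiberwise_of_maps_to]
    intro s _
    rw [Finset.mem_range]
    have := Finset.card_le_univ s
    simp only [Finset.card_univ, Fintype.card_fin] at this
    omega
  have step3 : ∀ ℓ ∈ Finset.range (d + 1),
      (∑ s ∈ Finset.univ.filter (fun s : Finset (Fin d) => s.card = ℓ), B s)
        = if ℓ = 0 then 0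
          else (d.choose ℓ : ℝ) * (unitBallVolume ℓ * r ^ d / (ℓ : ℝ) ^ (((d : ℝ) - ℓ) / 2)) := by
    intro ℓ _
    rcases eq_or_ne ℓ 0 with rfl | hℓ0
    · simp only [if_true]
      apply Finset.sum_eq_zero
      intro s hsmem
      have : s = ∅ := Finset.card_eq_zero.1 (Finset.mem_filter.1 hsmem).2
      rw [hB]; simp [this]
    · simp only [hℓ0, if_false]
      have hcount : (Finset.univ.filter (fun s : Finset (Fin d) => s.card = ℓ)).card
          = d.choose ℓ := by
        rw [← Finset.powerset_univ, ← Finset.powersetCard_eq_filter,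
          Finset.card_powersetCard, Finset.card_univ, Fintype.card_fin]
      rw [Finset.sum_congr rfl (fun s hsmem => ?_), Finset.sum_const, hcount, nsmul_eq_mul]
      have hcards : s.card = ℓ := (Finset.mem_filter.1 hsmem).2
      have hsne : s ≠ ∅ := by
        intro h
        rw [h, Finset.card_empty] at hcards
        exact hℓ0 hcards.symm
      rw [hB]
      simp only [hsne, if_false, hcards]
  calc (∑ k ∈ F, (2 : ℝ) ^ (Finset.univ.filter (fun i => k i ≠ 0)).card)
      ≤ ∑ s : Finset (Fin d), B s := step1
    _ = ∑ ℓ ∈ Finset.range (d + 1),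
          (if ℓ = 0 then 0
           else (d.choose ℓ : ℝ) * (unitBallVolume ℓ * r ^ d / (ℓ : ℝ) ^ (((d : ℝ) - ℓ) / 2))) := by
        rw [step2]; exact Finset.sum_congr rfl step3
    _ = ∑ ℓ ∈ Finset.Icc 1 d,
          (if ℓ = 0 then 0
           else (d.choose ℓ : ℝ) * (unitBallVolume ℓ * r ^ d / (ℓ : ℝ) ^ (((d : ℝ) - ℓ) / 2))) := by
        symm
        apply Finset.sum_subset
        · intro x hx
          rw [Finset.mem_Icc] at hx
          rw [Finset.mem_range]
          omega
        · intro x hx hnx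
          rw [Finset.mem_range] at hx
          rw [Finset.mem_Icc] at hnx
          have : x = 0 := by omega
          simp [this]
    _ = latticeConstant d * r ^ d := by
        rw [latticeConstant, Finset.sum_mul]
        apply Finset.sum_congr rfl
        intro ℓ hℓ
        rw [Finset.mem_Icc] at hℓ
        have : ℓ ≠ 0 := by omega
        simp only [this, if_false]
        ring
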